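/- For all real numbers t ≥ 0 and s ≥ e^{1/4}, one has s·t ≤ (e^{t²} − 1) + s·(log s)^{1/2}. -/
import Mathlib


theorem stmt_0 (t s : ℝ) (ht : 0 ≤ t) (hs : Real.exp (1/4) ≤ s) :
    s * t ≤ (Real.exp (t ^ 2) - 1) + s * Real.sqrt (Real.log s) := by
  set a := Real.sqrt (Real.log s) with ha
  have hs0 : (0:ℝ) < s := lt_of_lt_of_le (Real.exp_pos _) hs
  have hlog : 1/4 ≤ Real.log s := by
    rw [← Real.log_exp (1/4)]
    exact Real.log_le_log (Real.exp_pos _) hs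
  have ha2 : a ^ 2 = Real.log s := Real.sq_sqrt (by linarith)
  have ha12 : 1/2 ≤ a := by
    calc (1/2:ℝ) = Real.sqrt (1/4) := by
          rw [show (1/4:ℝ) = (1/2)^2 by norm_num, Real.sqrt_sq (by norm_num)]
      _ ≤ a := Real.sqrt_le_sqrt hlog
  have hs1 : 1 ≤ s := le_trans (Real.one_le_exp (by norm_num : (0:ℝ) ≤ 1/4)) hs
  rcases le_or_gt t a with h | h
  · have h1 : s * t ≤ s * a := by nlinarith
    have h2 : 0 ≤ Real.exp (t^2) - 1 := by
      have := Real.one_le_exp (sq_nonneg t); linarith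
    linarith
  · have key : s * (t^2 - Real.log s + 1) ≤ Real.exp (t^2) := by
      have h3 : t^2 - Real.log s + 1 ≤ Real.exp (t^2 - Real.log s) :=
        Real.add_one_le_exp _
      have h4 : Real.exp (t^2) = s * Real.exp (t^2 - Real.log s) := by
        rw [Real.exp_sub, Real.exp_log hs0]; field_simp
      rw [h4]; exact mul_le_mul_of_nonneg_left h3 (le_of_lt hs0)
    nlinarith [mul_nonneg (mul_nonneg hs0.le (sub_nonneg.mpr h.le))
      (by linarith : (0:ℝ) ≤ t + a - 1)]
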